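/- Let k ≥ 1 be an integer, let r be an integer with 0 < r < 2^k, and let x be a real number with x ≥ 2^{k+1}·(k+1). Then the sign of ∑_{0 ≤ ℓ < r} ε_ℓ/(x+ℓ) equals −ε_r; that is, this sum is strictly positive if ε_r = −1 and strictly negative if ε_r = +1. -/

import Mathlib

/-- Thue–Morse signs: `tmSign n = ε_n = (-1)^{t_n}`, where `t_n` is the parity of
the number of ones in the binary representation of `n`. -/
noncomputable def tmSign (n : ℕ) : ℝ := (-1 : ℝ) ^ (Nat.digits 2 n).sum

open Finset intervalIntegral

/-- partial Thue–Morse sum with shift -/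
noncomputable def tmS (x : ℝ) (m r : ℕ) : ℝ :=
  ∑ ℓ ∈ Finset.range r, tmSign ℓ / (x + ((m + ℓ : ℕ) : ℝ))

noncomputable def Cc : ℕ → ℝ := fun a => ∏ i ∈ Finset.range a, ((2:ℝ)^i * (i+1))

noncomputable def Etail (x : ℝ) (c a : ℕ) : ℝ :=
  ∑ i ∈ Finset.Ico (c+1) (a+1), Cc i / x^(i+1)

lemma tmSign_rec (n : ℕ) : tmSign n = (-1)^(n % 2) * tmSign (n / 2) := by
  rcases Nat.eq_zero_or_pos n with h | h
  · simp [h, tmSign]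
  · unfold tmSign
    rw [Nat.digits_def' (by norm_num : 1 < 2) h, List.sum_cons, pow_add]

lemma tmSign_eq_or (n : ℕ) : tmSign n = 1 ∨ tmSign n = -1 := by
  unfold tmSign
  rcases Nat.even_or_odd ((Nat.digits 2 n).sum) with h | h
  · left; exact h.neg_one_pow
  · right; exact h.neg_one_pow

lemma tmSign_zero : tmSign 0 = 1 := by simp [tmSign]

lemma tmSign_pow_add (a : ℕ) : ∀ s, s < 2^a → tmSign (2^a + s) = - tmSign s := by
  induction a with
  | zero =>
    intro s hs
    interval_cases s
    norm_num
    rw [tmSign_rec 1]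
    norm_num [tmSign_zero]
  | succ a ih =>
    intro s hs
    have h1 : (2^(a+1) + s) % 2 = s % 2 := by
      have : 2^(a+1) = 2 * 2^a := by ring
      omega
    have h2 : (2^(a+1) + s) / 2 = 2^a + s / 2 := by
      have : 2^(a+1) = 2 * 2^a := by ring
      omega
    have h3 : s / 2 < 2^a := by
      have : 2^(a+1) = 2 * 2^a := by ring
      omega
    rw [tmSign_rec (2^(a+1) + s), h1, h2, ih _ h3, tmSign_rec s]
    ring

lemma tm_poly (a : ℕ) (u : ℝ) :
    ∑ s ∈ range (2^a), tmSign s * u^s = ∏ i ∈ range a, (1 - u^(2^i)) := by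
  induction a with
  | zero => simp [tmSign_zero]
  | succ a ih =>
    have h2 : 2^(a+1) = 2^a + 2^a := by ring
    rw [h2, Finset.sum_range_add, prod_range_succ, ← ih]
    have : ∀ i ∈ range (2^a), tmSign (2^a + i) * u^(2^a + i)
        = -(u^(2^a) * (tmSign i * u^i)) := by
      intro i hi
      rw [tmSign_pow_add a i (mem_range.mp hi), pow_add]
      ring
    rw [Finset.sum_congr rfl this, Finset.sum_neg_distrib]
    rw [← Finset.mul_sum]
    ring

lemma one_sub_pow_le (h : ℕ) : ∀ u : ℝ, 0 ≤ u → u ≤ 1 → 1 - u^h ≤ h * (1-u) := by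
  induction h with
  | zero => intro u h0 h1; simp
  | succ h ih =>
    intro u h0 h1
    have hu : u^h ≤ 1 := pow_le_one₀ h0 h1
    have := ih u h0 h1
    have hr : 1 - u^(h+1) = (1-u) + u * (1 - u^h) := by ring
    push_cast
    nlinarith

lemma le_one_sub_pow (h : ℕ) : ∀ u : ℝ, 0 ≤ u → u ≤ 1 →
    (h : ℝ) * u^(h-1) * (1-u) ≤ 1 - u^h := by
  induction h with
  | zero => intro u h0 h1; simp
  | succ h ih =>
    intro u h0 h1
    rcases Nat.eq_zero_or_pos h with rfl | hh
    · norm_num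
    have hu : u^h ≤ 1 := pow_le_one₀ h0 h1
    have huh : u * u^(h-1) = u^h := by
      rw [← pow_succ']
      congr 1
      omega
    have := ih u h0 h1
    have hs : (h+1 : ℕ) - 1 = h := by omega
    rw [hs]
    have A : u * ((h:ℝ) * u^(h-1) * (1-u)) ≤ u * (1 - u^h) :=
      mul_le_mul_of_nonneg_left this h0
    have B : u * ((h:ℝ) * u^(h-1) * (1-u)) = h * u^h * (1-u) := by
      rw [← huh]; ring
    have C : (0:ℝ) ≤ (1-u) * (1 - u^h) :=
      mul_nonneg (by linarith) (by linarith)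
    have D : u * u^h = u^(h+1) := (pow_succ' u h).symm
    push_cast
    nlinarith

lemma sum_two_pow_sub (a : ℕ) : ∑ i ∈ range a, (2^i - 1) = 2^a - 1 - a := by
  induction a with
  | zero => simp
  | succ a ih =>
    rw [Finset.sum_range_succ, ih]
    have h1 : a + 1 ≤ 2^a := Nat.lt_two_pow_self
    have h2 : 2^(a+1) = 2^a + 2^a := by ring
    omega

lemma P_le (a : ℕ) (u : ℝ) (h0 : 0 ≤ u) (h1 : u ≤ 1) :
    ∏ i ∈ range a, (1 - u^(2^i)) ≤ (∏ i ∈ range a, (2:ℝ)^i) * (1-u)^a := by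
  have := Finset.prod_le_prod (f := fun i => 1 - u^(2^i))
    (g := fun i => (2:ℝ)^i * (1-u)) (s := range a)
    (fun i _ => by
      have h := pow_le_one₀ h0 h1 (n := 2^i)
      show (0:ℝ) ≤ 1 - u^(2^i)
      linarith)
    (fun i _ => by
      have h := one_sub_pow_le (2^i) u h0 h1
      show (1:ℝ) - u^(2^i) ≤ (2:ℝ)^i * (1-u)
      calc (1:ℝ) - u^(2^i) ≤ ((2^i : ℕ):ℝ) * (1-u) := h
        _ = (2:ℝ)^i * (1-u) := by push_cast; ring)
  calc ∏ i ∈ range a, (1 - u^(2^i)) ≤ ∏ i ∈ range a, ((2:ℝ)^i * (1-u)) := this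
    _ = (∏ i ∈ range a, (2:ℝ)^i) * (1-u)^a := by
        rw [Finset.prod_mul_distrib, Finset.prod_const, card_range]

lemma le_P (a : ℕ) (u : ℝ) (h0 : 0 ≤ u) (h1 : u ≤ 1) :
    (∏ i ∈ range a, (2:ℝ)^i) * (u^(2^a - 1 - a) * (1-u)^a)
      ≤ ∏ i ∈ range a, (1 - u^(2^i)) := by
  have key := Finset.prod_le_prod (f := fun i => (2:ℝ)^i * u^(2^i - 1) * (1-u))
    (g := fun i => 1 - u^(2^i)) (s := range a)
    (fun i _ => by
      have hA := pow_nonneg h0 (2^i - 1)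
      show (0:ℝ) ≤ (2:ℝ)^i * u^(2^i - 1) * (1-u)
      have hB : (0:ℝ) ≤ (2:ℝ)^i := by positivity
      have hC : (0:ℝ) ≤ 1 - u := by linarith
      positivity)
    (fun i _ => by
      have h := le_one_sub_pow (2^i) u h0 h1
      show (2:ℝ)^i * u^(2^i - 1) * (1-u) ≤ 1 - u^(2^i)
      calc (2:ℝ)^i * u^(2^i - 1) * (1-u) = ((2^i : ℕ) : ℝ) * u^(2^i - 1) * (1-u) := by
            push_cast; ring
        _ ≤ 1 - u^(2^i) := h)
  calc (∏ i ∈ range a, (2:ℝ)^i) * (u^(2^a - 1 - a) * (1-u)^a)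
      = ∏ i ∈ range a, ((2:ℝ)^i * u^(2^i - 1) * (1-u)) := by
        rw [Finset.prod_mul_distrib, Finset.prod_mul_distrib,
          Finset.prod_pow_eq_pow_sum (range a) (fun i => 2^i - 1) u,
          sum_two_pow_sub, Finset.prod_const, card_range]
        ring
    _ ≤ _ := key

lemma cont_rpow (c : ℝ) (hc : 0 < c) : Continuous (fun u : ℝ => u ^ c) :=
  Real.continuous_rpow_const hc.le

lemma intble (c : ℝ) (hc : 0 < c) (g : ℝ → ℝ) (hg : Continuous g) :
    IntervalIntegrable (fun u => u ^ c * g u) MeasureTheory.volume 0 1 :=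
  ((cont_rpow c hc).mul hg).intervalIntegrable 0 1

lemma J_eq (a : ℕ) : ∀ c : ℝ, 0 < c →
    (∫ u in (0:ℝ)..1, u ^ c * (1 - u)^a)
      = (Nat.factorial a : ℝ) / ∏ t ∈ range (a+1), (c + 1 + t) := by
  induction a with
  | zero =>
    intro c hc
    simp only [pow_zero, mul_one]
    rw [integral_rpow (Or.inl (by linarith))]
    rw [Real.one_rpow, Real.zero_rpow (by linarith)]
    simp
  | succ a ih =>
    intro c hc
    have key : ∀ u : ℝ, u ^ c * (1-u)^(a+1) = u ^ c * (1-u)^a - u ^ (c+1) * (1-u)^a := by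
      intro u
      rcases eq_or_ne u 0 with rfl | hu
      · rw [Real.zero_rpow hc.ne', Real.zero_rpow (by linarith)]
        ring
      · rw [Real.rpow_add_one hu]
        ring
    have h1 : (∫ u in (0:ℝ)..1, u ^ c * (1-u)^(a+1))
        = (∫ u in (0:ℝ)..1, u ^ c * (1-u)^a) - ∫ u in (0:ℝ)..1, u ^ (c+1) * (1-u)^a := by
      rw [← intervalIntegral.integral_sub
        (intble c hc _ (by continuity)) (intble (c+1) (by linarith) _ (by continuity))]
      congr 1
      funext u
      exact key u
    rw [h1, ih c hc, ih (c+1) (by linarith)]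
    have hpos : ∀ t ∈ range (a+2), (0:ℝ) < c + 1 + t := by
      intro t _
      have : (0:ℝ) ≤ t := Nat.cast_nonneg t
      linarith
    set p := ∏ t ∈ range (a+1), (c + 1 + t) with hp
    set q := ∏ t ∈ range (a+1), (c + 1 + 1 + t) with hq
    set P := ∏ t ∈ range (a+2), (c + 1 + t) with hP
    have hp0 : 0 < p := Finset.prod_pos (fun t ht => hpos t (by
      simp only [mem_range] at ht ⊢; omega))
    have hq0 : 0 < q := Finset.prod_pos (fun t _ => by
      have : (0:ℝ) ≤ t := Nat.cast_nonneg t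
      linarith)
    have hP1 : P = p * (c + 1 + (a+1)) := by
      rw [hP, hp, Finset.prod_range_succ]
      push_cast
      ring_nf
    have hP2 : P = (c + 1) * q := by
      rw [hP, Finset.prod_range_succ']
      have e2 : ∏ x ∈ range (a+1), (c + 1 + ((x:ℝ)+1)) = q := by
        rw [hq]
        apply Finset.prod_congr rfl
        intro t _
        ring
      push_cast
      rw [e2]
      ring
    have hP0 : 0 < P := by
      rw [hP2]; positivity
    have hfact : (Nat.factorial (a+1) : ℝ) = (a+1) * Nat.factorial a := by
      rw [Nat.factorial_succ]; push_cast; ring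
    rw [hfact, div_sub_div _ _ hp0.ne' hq0.ne', div_eq_div_iff (by positivity) hP0.ne']
    linear_combination ((Nat.factorial a : ℝ) * q) * hP1 - ((Nat.factorial a : ℝ) * p) * hP2

lemma int_rpow_pow (c : ℝ) (hc : 0 < c) (n a : ℕ) :
    ∫ u in (0:ℝ)..1, u ^ c * (u ^ n * (1 - u)^a)
      = (Nat.factorial a : ℝ) / ∏ t ∈ range (a+1), (c + n + 1 + t) := by
  have key : Set.EqOn (fun u : ℝ => u ^ c * (u ^ n * (1 - u)^a))
      (fun u : ℝ => u ^ (c + n) * (1 - u)^a) (Set.uIcc 0 1) := by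
    intro u hu01
    rw [Set.uIcc_of_le (by norm_num : (0:ℝ) ≤ 1)] at hu01
    simp only
    rcases eq_or_ne u 0 with rfl | hu
    · rcases Nat.eq_zero_or_pos n with rfl | hn
      · rw [Real.zero_rpow hc.ne']
        push_cast
        rw [Real.zero_rpow (by linarith)]
        ring
      · rw [Real.zero_rpow hc.ne', Real.zero_rpow (by positivity), zero_pow hn.ne']
        ring
    · have hupos : 0 < u := lt_of_le_of_ne hu01.1 (Ne.symm hu)
      rw [Real.rpow_add hupos, Real.rpow_natCast u n]
      ring
  rw [intervalIntegral.integral_congr key, J_eq a (c + n) (by positivity)]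

lemma contP (a : ℕ) : Continuous (fun u : ℝ => ∏ i ∈ range a, (1 - u^(2^i))) := by
  continuity

lemma tmS_pow_integral (x : ℝ) (hx : 1 < x) (m a : ℕ) :
    tmS x m (2^a) = ∫ u in (0:ℝ)..1, u ^ (x + m - 1) * ∏ i ∈ range a, (1 - u^(2^i)) := by
  set c : ℝ := x + m - 1 with hcdef
  have hc : 0 < c := by
    have : (0:ℝ) ≤ m := Nat.cast_nonneg m
    rw [hcdef]; linarith
  have hrw : ∀ u : ℝ, u ^ c * ∏ i ∈ range a, (1 - u^(2^i))
      = ∑ s ∈ range (2^a), tmSign s * (u ^ c * (u ^ s * (1-u)^0)) := by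
    intro u
    rw [← tm_poly, Finset.mul_sum]
    apply Finset.sum_congr rfl
    intro s _
    ring
  have h1 : (∫ u in (0:ℝ)..1, u ^ c * ∏ i ∈ range a, (1 - u^(2^i)))
      = ∑ s ∈ range (2^a), ∫ u in (0:ℝ)..1, tmSign s * (u ^ c * (u ^ s * (1-u)^0)) := by
    rw [← intervalIntegral.integral_finset_sum]
    · congr 1
      funext u
      exact hrw u
    · intro s _
      exact (intble c hc _ (by continuity)).const_mul _
  rw [h1]
  unfold tmS
  apply Finset.sum_congr rfl
  intro s _
  rw [intervalIntegral.integral_const_mul, int_rpow_pow c hc s 0]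
  have hden : c + s + 1 + ((0:ℕ):ℝ) = x + ((m + s : ℕ):ℝ) := by push_cast; ring
  rw [Finset.prod_range_one, hden]
  simp [div_eq_mul_inv]

lemma cc_eq (a : ℕ) : Cc a = (∏ i ∈ range a, (2:ℝ)^i) * (Nat.factorial a) := by
  unfold Cc
  rw [Finset.prod_mul_distrib]
  congr 1
  rw [← Finset.prod_range_add_one_eq_factorial a, Nat.cast_prod]
  push_cast
  rfl

lemma cc_pos (a : ℕ) : 0 < Cc a := by
  unfold Cc
  apply Finset.prod_pos
  intro i _
  positivity

lemma tmS_pow_le (x : ℝ) (hx : 1 < x) (m a : ℕ) :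
    tmS x m (2^a) ≤ Cc a / x^(a+1) := by
  set c : ℝ := x + m - 1 with hcdef
  have hm0 : (0:ℝ) ≤ m := Nat.cast_nonneg m
  have hc : 0 < c := by rw [hcdef]; linarith
  set K : ℝ := ∏ i ∈ range a, (2:ℝ)^i with hK
  have hK0 : 0 < K := by rw [hK]; positivity
  rw [tmS_pow_integral x hx m a]
  have step1 : (∫ u in (0:ℝ)..1, u ^ c * ∏ i ∈ range a, (1 - u^(2^i)))
      ≤ ∫ u in (0:ℝ)..1, u ^ c * (K * ((1:ℝ)-u)^a) := by
    apply intervalIntegral.integral_mono_on (by norm_num)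
      (intble c hc _ (contP a)) (intble c hc _ (by continuity))
    intro u hu
    exact mul_le_mul_of_nonneg_left (P_le a u hu.1 hu.2) (Real.rpow_nonneg hu.1 c)
  have step2 : (∫ u in (0:ℝ)..1, u ^ c * (K * (1-u)^a))
      = K * ((Nat.factorial a : ℝ) / ∏ t ∈ range (a+1), (c + 1 + t)) := by
    have : ∀ u : ℝ, u ^ c * (K * (1-u)^a) = K * (u ^ c * (1-u)^a) := fun u => by ring
    rw [show (fun u:ℝ => u ^ c * (K * (1-u)^a)) = (fun u:ℝ => K * (u ^ c * (1-u)^a)) from funext this,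
      intervalIntegral.integral_const_mul, J_eq a c hc]
  have hprod : x^(a+1) ≤ ∏ t ∈ range (a+1), (c + 1 + t) := by
    calc x^(a+1) = ∏ _t ∈ range (a+1), x := by rw [Finset.prod_const, card_range]
      _ ≤ _ := ?_
    apply Finset.prod_le_prod
    · intro t _; linarith
    · intro t _
      have : (0:ℝ) ≤ t := Nat.cast_nonneg t
      rw [hcdef]; linarith
  have hfin : K * ((Nat.factorial a : ℝ) / ∏ t ∈ range (a+1), (c + 1 + t))
      ≤ Cc a / x^(a+1) := by
    rw [cc_eq a, mul_div_assoc]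
    apply mul_le_mul_of_nonneg_left _ hK0.le
    apply div_le_div_of_nonneg_left (by positivity) (by positivity) hprod
  linarith

lemma le_tmS_pow (k : ℕ) (x : ℝ) (hx : 1 < x) (m a : ℕ) (hm : m + 2^a ≤ 2^k) :
    Cc a / (x + 2^k)^(a+1) ≤ tmS x m (2^a) := by
  set c : ℝ := x + m - 1 with hcdef
  have hm0 : (0:ℝ) ≤ m := Nat.cast_nonneg m
  have hc : 0 < c := by rw [hcdef]; linarith
  set K : ℝ := ∏ i ∈ range a, (2:ℝ)^i with hK
  have hK0 : 0 < K := by rw [hK]; positivity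
  set d : ℕ := 2^a - 1 - a with hd
  have hpowa : a + 1 ≤ 2^a := Nat.lt_two_pow_self
  rw [tmS_pow_integral x hx m a]
  have step1 : (∫ u in (0:ℝ)..1, u ^ c * (K * (u^d * ((1:ℝ)-u)^a)))
      ≤ ∫ u in (0:ℝ)..1, u ^ c * ∏ i ∈ range a, (1 - u^(2^i)) := by
    apply intervalIntegral.integral_mono_on (by norm_num)
      (intble c hc _ (by continuity)) (intble c hc _ (contP a))
    intro u hu
    have := le_P a u hu.1 hu.2
    exact mul_le_mul_of_nonneg_left (by rw [hK, hd]; exact this) (Real.rpow_nonneg hu.1 c)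
  have step2 : (∫ u in (0:ℝ)..1, u ^ c * (K * (u^d * (1-u)^a)))
      = K * ((Nat.factorial a : ℝ) / ∏ t ∈ range (a+1), (c + d + 1 + t)) := by
    have : ∀ u : ℝ, u ^ c * (K * (u^d * (1-u)^a)) = K * (u ^ c * (u^d * (1-u)^a)) :=
      fun u => by ring
    rw [show (fun u:ℝ => u ^ c * (K * (u^d*(1-u)^a))) = (fun u:ℝ => K * (u ^ c * (u^d*(1-u)^a))) from funext this,
      intervalIntegral.integral_const_mul, int_rpow_pow c hc d a]
  have hprod : ∏ t ∈ range (a+1), (c + d + 1 + t) ≤ (x + 2^k)^(a+1) := by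
    calc ∏ t ∈ range (a+1), (c + d + 1 + t) ≤ ∏ _t ∈ range (a+1), (x + 2^k) := ?_
      _ = (x + 2^k)^(a+1) := by rw [Finset.prod_const, card_range]
    apply Finset.prod_le_prod
    · intro t _
      have : (0:ℝ) ≤ d := Nat.cast_nonneg d
      have : (0:ℝ) ≤ t := Nat.cast_nonneg t
      rw [hcdef]; linarith
    · intro t ht
      have htle : t ≤ a := by
        have := mem_range.mp ht; omega
      have hnat : m + d + t ≤ 2^k := by omega
      have : ((m + d + t : ℕ):ℝ) ≤ ((2^k : ℕ):ℝ) := Nat.cast_le.mpr hnat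
      push_cast at this
      rw [hcdef]
      linarith
  have hfin : Cc a / (x + 2^k)^(a+1)
      ≤ K * ((Nat.factorial a : ℝ) / ∏ t ∈ range (a+1), (c + d + 1 + t)) := by
    rw [cc_eq a, mul_div_assoc]
    apply mul_le_mul_of_nonneg_left _ hK0.le
    have hp0 : (0:ℝ) < ∏ t ∈ range (a+1), (c + d + 1 + t) := by
      apply Finset.prod_pos
      intro t _
      have h1 : (0:ℝ) ≤ d := Nat.cast_nonneg d
      have h2 : (0:ℝ) ≤ t := Nat.cast_nonneg t
      rw [hcdef]; linarith
    apply div_le_div_of_nonneg_left (by positivity) hp0 hprod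
  linarith

lemma one_add_pow_le (t : ℝ) (ht : 0 ≤ t) : ∀ n : ℕ, (1+t)^n * (1 - n*t) ≤ 1 := by
  intro n
  induction n with
  | zero => simp
  | succ n ih =>
    rcases le_or_gt (1 - ((n:ℝ)+1)*t) 0 with h | h
    · have : (0:ℝ) ≤ (1+t)^(n+1) := by positivity
      push_cast
      nlinarith
    · have key : (1+t) * (1 - ((n:ℝ)+1)*t) ≤ 1 - n*t := by
        nlinarith [mul_nonneg (mul_nonneg (Nat.cast_nonneg n : (0:ℝ) ≤ n) ht) ht,
          mul_nonneg ht ht]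
      have h2 : (0:ℝ) ≤ (1+t)^n := by positivity
      have : (1+t)^(n+1) * (1 - ((n:ℝ)+1)*t) = (1+t)^n * ((1+t) * (1 - ((n:ℝ)+1)*t)) := by
        ring
      push_cast
      rw [this]
      calc (1+t)^n * ((1+t) * (1 - ((n:ℝ)+1)*t)) ≤ (1+t)^n * (1 - n*t) :=
            mul_le_mul_of_nonneg_left key h2
        _ ≤ 1 := ih

lemma pow_shift_le (x y : ℝ) (hx : 0 < x) (hy : 0 ≤ y) (n : ℕ) (h : (n:ℝ) * y ≤ x / 2) :
    (x + y)^n ≤ 2 * x^n := by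
  have ht : 0 ≤ y / x := by positivity
  have hb := one_add_pow_le (y/x) ht n
  have h2 : (1:ℝ)/2 ≤ 1 - n * (y/x) := by
    have h6 : (n:ℝ)*(y/x) = (n*y)/x := by ring
    have h7 : ((n:ℝ)*y)/x ≤ 1/2 := by
      rw [div_le_iff₀ hx]
      linarith
    rw [h6]
    linarith
  have h3 : (1+y/x)^n * (1/2) ≤ 1 := by
    calc (1+y/x)^n * (1/2) ≤ (1+y/x)^n * (1 - n*(y/x)) := by
          apply mul_le_mul_of_nonneg_left h2 (by positivity)
      _ ≤ 1 := hb
  have h4 : (1+y/x)^n ≤ 2 := by linarith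
  have h5 : (x+y)^n = x^n * (1+y/x)^n := by
    rw [← mul_pow]
    congr 1
    field_simp
  rw [h5]
  calc x^n * (1+y/x)^n ≤ x^n * 2 := mul_le_mul_of_nonneg_left h4 (by positivity)
    _ = 2 * x^n := by ring

lemma geom_quarter (n : ℕ) : ∑ j ∈ range n, ((1:ℝ)/4)^(j+1) ≤ 1/3 := by
  have key : ∀ n : ℕ, ∑ j ∈ range n, ((1:ℝ)/4)^(j+1) = (1/3) * (1 - (1/4)^n) := by
    intro n
    induction n with
    | zero => simp
    | succ n ih => rw [Finset.sum_range_succ, ih, pow_succ]; ring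
  rw [key]
  have : (0:ℝ) ≤ (1/4)^n := by positivity
  linarith

section Est

variable (k : ℕ) (x : ℝ)

lemma ratio_le (hx : 2^(k+1) * ((k:ℝ)+1) ≤ x) (i : ℕ) (hik : i < k) :
    Cc (i+1) / x^(i+2) ≤ (1/4) * (Cc i / x^(i+1)) := by
  have hx0 : (0:ℝ) < x := by
    have h1 : (0:ℝ) < 2^(k+1) * ((k:ℝ)+1) := by positivity
    linarith
  have hCc : Cc (i+1) = Cc i * (2^i * (i+1)) := Finset.prod_range_succ _ i
  have hxi : 4 * ((2:ℝ)^i * ((i:ℝ)+1)) ≤ x := by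
    have h1 : (2:ℝ)^(i+2) ≤ 2^(k+1) :=
      pow_le_pow_right₀ (by norm_num) (by omega)
    have h2 : ((i:ℝ)+1) ≤ (k:ℝ)+1 := by
      have : (i:ℝ) ≤ k := Nat.cast_le.mpr hik.le
      linarith
    have h3 : (4:ℝ) * 2^i = 2^(i+2) := by ring
    nlinarith [pow_pos (by norm_num : (0:ℝ) < 2) i, pow_pos (by norm_num : (0:ℝ) < 2) (k+1)]
  have h5 : (0:ℝ) < Cc i := cc_pos i
  have key : Cc i * (x/4) / x^(i+2) = (1/4) * (Cc i / x^(i+1)) := by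
    field_simp
    ring
  calc Cc (i+1) / x^(i+2) = Cc i * (2^i*((i:ℝ)+1)) / x^(i+2) := by rw [hCc]
    _ ≤ Cc i * (x/4) / x^(i+2) := by
        apply (div_le_div_iff_of_pos_right (by positivity)).mpr
        apply mul_le_mul_of_nonneg_left (by linarith) h5.le
    _ = (1/4) * (Cc i / x^(i+1)) := key

lemma term_le (hx : 2^(k+1) * ((k:ℝ)+1) ≤ x) :
    ∀ j i : ℕ, i + j ≤ k → Cc (i+j) / x^(i+j+1) ≤ (1/4)^j * (Cc i / x^(i+1)) := by
  intro j
  induction j with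
  | zero => intro i _; simp
  | succ j ih =>
    intro i hij
    have h1 : Cc (i+(j+1)) / x^(i+(j+1)+1) ≤ (1/4) * (Cc (i+j) / x^(i+j+1)) := by
      have := ratio_le k x hx (i+j) (by omega)
      convert this using 3 <;> omega
    have h2 := ih i (by omega)
    calc Cc (i+(j+1)) / x^(i+(j+1)+1) ≤ (1/4) * (Cc (i+j) / x^(i+j+1)) := h1
      _ ≤ (1/4) * ((1/4)^j * (Cc i / x^(i+1))) := by linarith
      _ = (1/4)^(j+1) * (Cc i / x^(i+1)) := by ring

lemma Etail_le (hx : 2^(k+1) * ((k:ℝ)+1) ≤ x) (c a : ℕ) (hak : a ≤ k) :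
    Etail x c a ≤ (1/3) * (Cc c / x^(c+1)) := by
  have hx0 : (0:ℝ) < x := by
    have h1 : (0:ℝ) < 2^(k+1) * ((k:ℝ)+1) := by positivity
    linarith
  unfold Etail
  rw [Finset.sum_Ico_eq_sum_range]
  have hb : ∀ j ∈ range (a + 1 - (c+1)), Cc (c+1+j) / x^(c+1+j+1) ≤ (1/4)^(j+1) * (Cc c / x^(c+1)) := by
    intro j hj
    have hj' : j < a - c := by
      have := mem_range.mp hj; omega
    have := term_le k x hx (j+1) c (by omega)
    convert this using 3 <;> omega
  calc ∑ j ∈ range (a+1-(c+1)), Cc (c+1+j) / x^(c+1+j+1)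
      ≤ ∑ j ∈ range (a+1-(c+1)), (1/4)^(j+1) * (Cc c / x^(c+1)) := Finset.sum_le_sum hb
    _ = (∑ j ∈ range (a+1-(c+1)), ((1:ℝ)/4)^(j+1)) * (Cc c / x^(c+1)) := by
        rw [Finset.sum_mul]
    _ ≤ (1/3) * (Cc c / x^(c+1)) := by
        apply mul_le_mul_of_nonneg_right (geom_quarter _)
        exact div_nonneg (cc_pos c).le (by positivity)

end Est

lemma main_bound (k : ℕ) (x : ℝ) (hx : 2^(k+1) * ((k:ℝ)+1) ≤ x) :
    ∀ r : ℕ, ∀ m c t : ℕ, r = 2^c * (2*t+1) → m + r ≤ 2^k →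
      Cc c / (2 * x^(c+1)) - Etail x c (Nat.log 2 r) ≤ (- tmSign r) * tmS x m r := by
  have hx1 : (1:ℝ) < x := by
    have h1 : (2:ℝ)^1 ≤ 2^(k+1) := pow_le_pow_right₀ (by norm_num) (by omega)
    have h2 : (1:ℝ) ≤ (k:ℝ)+1 := by
      have : (0:ℝ) ≤ k := Nat.cast_nonneg k
      linarith
    nlinarith
  have hx0 : (0:ℝ) < x := by linarith
  intro r
  induction r using Nat.strong_induction_on with
  | _ r IH =>
    intro m c t hrc hmr
    have hr0 : 0 < r := by
      rw [hrc]; positivity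
    set a := Nat.log 2 r with hadef
    have ha1 : 2^a ≤ r := Nat.pow_log_le_self 2 hr0.ne'
    have ha2 : r < 2^(a+1) := Nat.lt_pow_succ_log_self (by norm_num) r
    have ha2' : 2^(a+1) = 2^a + 2^a := by ring
    have hak : a ≤ k := by
      have h2 : 2^a ≤ 2^k := le_trans ha1 (by omega)
      exact (Nat.pow_le_pow_iff_right (by norm_num)).mp h2
    -- the key comparison (x + 2^k)^(a+1) ≤ 2 x^(a+1)
    have hshift : (x + 2^k)^(a+1) ≤ 2 * x^(a+1) := by
      apply pow_shift_le x (2^k) hx0 (by positivity)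
      have h1 : ((a:ℝ)+1) ≤ (k:ℝ)+1 := by
        have : (a:ℝ) ≤ k := Nat.cast_le.mpr hak
        linarith
      have h2 : (2:ℝ)^(k+1) = 2 * 2^k := by ring
      have h3 : (0:ℝ) < (2:ℝ)^k := by positivity
      have hcast : ((a+1 : ℕ):ℝ) = (a:ℝ)+1 := by push_cast; ring
      rw [hcast]
      nlinarith
    have hG2 : Cc a / (2 * x^(a+1)) ≤ tmS x m (2^a) := by
      have hmk : m + 2^a ≤ 2^k := by omega
      have h1 := le_tmS_pow k x hx1 m a hmk
      have h2 : Cc a / (2 * x^(a+1)) ≤ Cc a / (x + 2^k)^(a+1) := by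
        apply div_le_div_of_nonneg_left (cc_pos a).le (by positivity) hshift
      linarith
    have hGpos : 0 ≤ tmS x m (2^a) := by
      have h3 : (0:ℝ) < Cc a / (2 * x^(a+1)) := by
        have := cc_pos a
        positivity
      linarith
    have hGle : tmS x m (2^a) ≤ Cc a / x^(a+1) := tmS_pow_le x hx1 m a
    set s := r - 2^a with hsdef
    have hs : s < 2^a := by omega
    have hras : r = 2^a + s := by omega
    rcases Nat.eq_zero_or_pos s with hs0 | hs0
    · -- r = 2^a
      have hra : r = 2^a := by omega
      have hodd : (2*t+1) ∣ 2^a := ⟨2^c, by rw [← hra, hrc]; ring⟩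
      have hcop : Nat.Coprime (2*t+1) 2 := Nat.coprime_two_right.mpr ⟨t, by omega⟩
      have ht0 : 2*t+1 = 1 := (hcop.pow_right a).eq_one_of_dvd hodd
      rw [ht0, mul_one] at hrc
      have hca : c = a := Nat.pow_right_injective (le_refl 2)
        (show (2:ℕ)^c = (2:ℕ)^a by omega)
      have hsign : (- tmSign r) = 1 := by
        rw [hra, show 2^a = 2^a + 0 by omega, tmSign_pow_add a 0 (Nat.two_pow_pos a),
          tmSign_zero]
        norm_num
      have hlog : Nat.log 2 r = a := by rw [hra]; exact Nat.log_pow (by norm_num) a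
      have hE0 : Etail x c (Nat.log 2 r) = 0 := by
        rw [hlog, hca]
        unfold Etail
        rw [Finset.Ico_self, Finset.sum_empty]
      rw [hE0, hsign, hca, sub_zero, one_mul, hra]
      exact hG2
    · -- s > 0
      have hrs : s < r := by omega
      have hsign : tmSign r = - tmSign s := by
        rw [hras]; exact tmSign_pow_add a s hs
      set a' := Nat.log 2 s with ha'def
      have ha' : a' < a := Nat.log_lt_of_lt_pow hs0.ne' hs
      have hr2c : 2^c ≤ r := Nat.le_of_dvd hr0 ⟨2*t+1, hrc⟩
      have hca1 : c < a + 1 := by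
        have := lt_of_le_of_lt hr2c ha2
        exact (Nat.pow_lt_pow_iff_right (by norm_num)).mp this
      have hca : c < a := by
        rcases Nat.lt_or_ge c a with h | h
        · exact h
        · exfalso
          have hce : c = a := by omega
          rw [hce] at hrc
          rw [hrc, ha2', ← two_mul, mul_comm 2 (2^a)] at ha2
          have h21 : 2*t+1 < 2 := Nat.lt_of_mul_lt_mul_left ha2
          have ht00 : t = 0 := by omega
          rw [ht00, Nat.mul_zero, Nat.zero_add, Nat.mul_one] at hrc
          omega
      set T := 2^(a-c-1) with hTdef
      have hD : 2^c * (2 * T) = 2^a := by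
        rw [hTdef, ← pow_succ' 2 (a-c-1), ← pow_add]
        congr 1
        omega
      have hT : T ≤ t := by
        have h1 : 2^c * (2*T) ≤ 2^c * (2*t+1) := by
          rw [hD, ← hrc]; exact ha1
        have h2 : 2*T ≤ 2*t+1 := Nat.le_of_mul_le_mul_left h1 (Nat.two_pow_pos c)
        omega
      have hs_dec : s = 2^c * (2*(t-T)+1) := by
        have h9 : 2*t+1 = (2*(t-T)+1) + 2*T := by omega
        have h10 : r = 2^c * (2*(t-T)+1) + 2^a := by
          rw [hrc, h9, Nat.mul_add, hD]
        omega
      have hcs : 2^c ≤ s := Nat.le_of_dvd hs0 ⟨2*(t-T)+1, hs_dec⟩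
      have hca' : c ≤ a' := (Nat.le_log_iff_pow_le (by norm_num) hs0.ne').mpr hcs
      have hIH := IH s hrs (m + 2^a) c (t-T) hs_dec (by omega)
      rw [← ha'def] at hIH
      -- splitting the sum
      have hsplit : tmS x m r = tmS x m (2^a) - tmS x (m + 2^a) s := by
        unfold tmS
        rw [hras, Finset.sum_range_add]
        have hneg : ∀ ℓ ∈ range s, tmSign (2^a + ℓ) / (x + (((m + (2^a + ℓ) : ℕ)):ℝ))
            = -(tmSign ℓ / (x + (((m + 2^a) + ℓ : ℕ):ℝ))) := by
          intro ℓ hℓ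
          have hℓ2 : ℓ < 2^a := lt_trans (mem_range.mp hℓ) hs
          rw [tmSign_pow_add a ℓ hℓ2, show m + (2^a + ℓ) = (m + 2^a) + ℓ by omega]
          ring
        rw [Finset.sum_congr rfl hneg, Finset.sum_neg_distrib]
        ring
      have hsg : tmSign r * tmS x m (2^a) ≤ Cc a / x^(a+1) := by
        rcases tmSign_eq_or r with h | h
        · rw [h, one_mul]; exact hGle
        · rw [h]
          have : (0:ℝ) < Cc a / x^(a+1) := by
            have := cc_pos a
            positivity
          nlinarith
      have hcomb : (- tmSign r) * tmS x m r
          = -(tmSign r * tmS x m (2^a)) + (- tmSign s) * tmS x (m + 2^a) s := by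
        rw [hsplit, hsign]; ring
      have hEmono : Etail x c a' + Cc a / x^(a+1) ≤ Etail x c a := by
        have hsplitE : Etail x c a' + ∑ i ∈ Finset.Ico (a'+1) (a+1), Cc i / x^(i+1)
            = Etail x c a := by
          unfold Etail
          exact Finset.sum_Ico_consecutive _ (by omega) (by omega)
        have hterm : Cc a / x^(a+1) ≤ ∑ i ∈ Finset.Ico (a'+1) (a+1), Cc i / x^(i+1) := by
          apply Finset.single_le_sum (f := fun i => Cc i / x^(i+1))
          · intro i _
            exact div_nonneg (cc_pos i).le (by positivity)
          · rw [Finset.mem_Ico]; omega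
        linarith
      rw [hcomb]
      linarith

/-- for `k ≥ 1`, `0 < r < 2^k`, and `x ≥ 2^{k+1}(k+1)`, the sign of
`∑_{0 ≤ ℓ < r} ε_ℓ/(x+ℓ)` equals `-ε_r`. -/
theorem stmt_9 (k : ℕ) (hk : 1 ≤ k) (r : ℕ) (hr0 : 0 < r) (hrk : r < 2 ^ k)
    (x : ℝ) (hx : 2 ^ (k + 1) * ((k : ℝ) + 1) ≤ x) :
    Real.sign (∑ ℓ ∈ Finset.range r, tmSign ℓ / (x + ℓ)) = - tmSign r := by
  have hx0 : (0:ℝ) < x := by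
    have h1 : (0:ℝ) < 2^(k+1) * ((k:ℝ)+1) := by positivity
    linarith
  obtain ⟨c, q, hq2, hrq⟩ := Nat.exists_eq_pow_mul_and_not_dvd hr0.ne' 2 (by norm_num)
  have hq : q = 2 * (q/2) + 1 := by omega
  have hdec : r = 2^c * (2 * (q/2) + 1) := by rw [hrq, ← hq]
  have hbound := main_bound k x hx r 0 c (q/2) hdec (by omega)
  set a := Nat.log 2 r with hadef
  have hak : a ≤ k := (Nat.log_lt_of_lt_pow hr0.ne' hrk).le
  have hE := Etail_le k x hx c a hak
  have hpos : 0 < (- tmSign r) * tmS x 0 r := by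
    have h1 : (0:ℝ) < Cc c / x^(c+1) := by
      have := cc_pos c
      positivity
    have h2 : Cc c / (2 * x^(c+1)) = (1/2) * (Cc c / x^(c+1)) := by
      field_simp
    calc (0:ℝ) < (1/2) * (Cc c / x^(c+1)) - (1/3) * (Cc c / x^(c+1)) := by linarith
      _ ≤ Cc c / (2 * x^(c+1)) - Etail x c a := by rw [h2]; linarith
      _ ≤ (- tmSign r) * tmS x 0 r := hbound
  have hsum : tmS x 0 r = ∑ ℓ ∈ Finset.range r, tmSign ℓ / (x + ℓ) := by
    unfold tmS
    apply Finset.sum_congr rfl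
    intro ℓ _
    norm_num
  rw [hsum] at hpos
  rcases tmSign_eq_or r with h | h
  · rw [h] at hpos ⊢
    have : (∑ ℓ ∈ Finset.range r, tmSign ℓ / (x + ℓ)) < 0 := by linarith
    rw [Real.sign_of_neg this]
  · rw [h] at hpos ⊢
    have : 0 < (∑ ℓ ∈ Finset.range r, tmSign ℓ / (x + ℓ)) := by linarith
    rw [Real.sign_of_pos this]
    norm_num
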